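/- Random-coding MAC achievability: with 2^{C₁} codewords X(m₁) i.i.d. ~ P_X, 2^{C₂} codewords Y(m₂) i.i.d. ~ P_Y, decoding by unique joint membership in a set 𝒜 ⊆ 𝒳×𝒴×𝒵, the average probability of error is at most Pr[(X(m₁),Y(m₂),Z) ∉ 𝒜] + 2^{C₁}·2^{−(a₁+b₁−d)} + 2^{C₂}·2^{−(a₂+b₂−d)} + 2^{C₁+C₂}·2^{−(a₁+a₂+c−d)}, where the exponents bound the probabilities of the three confusion events as in the pairwise lemmas. -/

import Mathlib

open Finset

/-- A probability mass function on a finite alphabet. -/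
def IsPMF {α : Type*} [Fintype α] (P : α → ℝ) : Prop :=
  (∀ a, 0 ≤ P a) ∧ ∑ a, P a = 1

/-- Marginal on the first coordinate. -/
noncomputable def margX {α β : Type*} [Fintype β] (P : α × β → ℝ) : α → ℝ :=
  fun x => ∑ y, P (x, y)

/-- Marginal on the second coordinate. -/
noncomputable def margY {α β : Type*} [Fintype α] (P : α × β → ℝ) : β → ℝ :=
  fun y => ∑ x, P (x, y)

/-- Rényi entropy of order 0 : log₂ of the support size. -/
noncomputable def H0 {α : Type*} [Fintype α] (P : α → ℝ) : ℝ :=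
  Real.logb 2 ((Finset.univ.filter fun a => 0 < P a).card)

/-- Conditional Rényi entropy of order 0:
`H₀(X|Y) = log₂ max_{y : P_Y(y) > 0} |supp P_{X|Y=y}|`.
(Note `supp P_{X|Y=y} = {x : P_{XY}(x,y) > 0}` when `P_Y(y) > 0`.) -/
noncomputable def H0cond {α β : Type*} [Fintype α] [Fintype β] (P : α × β → ℝ) : ℝ :=
  Real.logb 2 ((((Finset.univ.filter fun y => 0 < margY P y).sup
    fun y => (Finset.univ.filter fun x => 0 < P (x, y)).card : ℕ) : ℝ))

attribute [local instance] Classical.propDecidable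

set_option linter.unusedSectionVars false
set_option maxHeartbeats 1000000

set_option linter.unusedSectionVars false
set_option maxHeartbeats 1000000

section helpers
variable {ι A : Type*} [Fintype ι] [DecidableEq ι] [Fintype A] [DecidableEq A]

private lemma sum_pi_prod' (h : ι → A → ℝ) :
    ∑ f : ι → A, ∏ i, h i (f i) = ∏ i, ∑ a, h i a := by
  rw [Finset.prod_univ_sum, Fintype.piFinset_univ]

private lemma prod_two_ite' {M : Type*} [CommMonoid M] {j k : ι} (hjk : j ≠ k) (F G : ι → M) :
    (∏ i, (if i = j then F i else if i = k then G i else 1)) = F j * G k := by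
  rw [← Finset.mul_prod_erase univ _ (mem_univ j), if_pos rfl,
    ← Finset.mul_prod_erase ((univ : Finset ι).erase j) _
      (by simp [Ne.symm hjk] : k ∈ (univ : Finset ι).erase j),
    if_neg (Ne.symm hjk), if_pos rfl]
  rw [Finset.prod_eq_one, mul_one]
  intro i hi
  simp only [Finset.mem_erase] at hi
  rw [if_neg hi.2.1, if_neg hi.1]

private lemma prod_one_ite' {M : Type*} [CommMonoid M] (j : ι) (F : ι → M) :
    (∏ i, (if i = j then F i else 1)) = F j := by
  rw [Finset.prod_ite_eq' univ j F, if_pos (mem_univ j)]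

private lemma sum_coord_ind' (P : A → ℝ) (hP : ∑ a, P a = 1) (j : ι) (x : A) :
    ∑ f : ι → A, (∏ i, P (f i)) * (if f j = x then 1 else 0) = P x := by
  have step : ∀ f : ι → A, (∏ i, P (f i)) * (if f j = x then 1 else 0)
      = ∏ i, (P (f i) * (if i = j then (if f i = x then (1:ℝ) else 0) else 1)) := by
    intro f
    rw [Finset.prod_mul_distrib, prod_one_ite' j (fun i => if f i = x then (1:ℝ) else 0)]
  calc ∑ f : ι → A, (∏ i, P (f i)) * (if f j = x then 1 else 0)
      = ∑ f : ι → A, ∏ i, (P (f i) * (if i = j then (if f i = x then (1:ℝ) else 0) else 1)) :=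
        Finset.sum_congr rfl fun f _ => step f
    _ = ∏ i, ∑ a, (P a * (if i = j then (if a = x then (1:ℝ) else 0) else 1)) :=
        sum_pi_prod' (fun i a => P a * (if i = j then (if a = x then (1:ℝ) else 0) else 1))
    _ = ∏ i, (if i = j then P x else 1) := by
        refine Finset.prod_congr rfl fun i _ => ?_
        split_ifs with h
        · simp [mul_ite, mul_one, mul_zero, Finset.sum_ite_eq' univ x P]
        · simp [hP]
    _ = P x := prod_one_ite' j _

private lemma sum_coord_ind'2 (P : A → ℝ) (hP : ∑ a, P a = 1) {j k : ι} (hjk : j ≠ k) (x y : A) :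
    ∑ f : ι → A, (∏ i, P (f i)) * ((if f j = x then 1 else 0) * (if f k = y then 1 else 0))
      = P x * P y := by
  have step : ∀ f : ι → A, (∏ i, P (f i)) * ((if f j = x then 1 else 0) * (if f k = y then 1 else 0))
      = ∏ i, (P (f i) * (if i = j then (if f i = x then (1:ℝ) else 0)
          else if i = k then (if f i = y then (1:ℝ) else 0) else 1)) := by
    intro f
    rw [Finset.prod_mul_distrib,
      prod_two_ite' hjk (fun i => if f i = x then (1:ℝ) else 0) (fun i => if f i = y then (1:ℝ) else 0)]
  calc ∑ f : ι → A, (∏ i, P (f i)) * ((if f j = x then 1 else 0) * (if f k = y then 1 else 0))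
      = ∑ f : ι → A, ∏ i, (P (f i) * (if i = j then (if f i = x then (1:ℝ) else 0)
          else if i = k then (if f i = y then (1:ℝ) else 0) else 1)) :=
        Finset.sum_congr rfl fun f _ => step f
    _ = ∏ i, ∑ a, (P a * (if i = j then (if a = x then (1:ℝ) else 0)
          else if i = k then (if a = y then (1:ℝ) else 0) else 1)) :=
        sum_pi_prod' (fun i a => P a * (if i = j then (if a = x then (1:ℝ) else 0)
          else if i = k then (if a = y then (1:ℝ) else 0) else 1))
    _ = ∏ i, (if i = j then P x else if i = k then P y else 1) := by
        refine Finset.prod_congr rfl fun i _ => ?_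
        split_ifs with h h'
        · simp [mul_ite, mul_one, mul_zero, Finset.sum_ite_eq' univ x P]
        · simp [mul_ite, mul_one, mul_zero, Finset.sum_ite_eq' univ y P]
        · simp [hP]
    _ = P x * P y := prod_two_ite' hjk (fun _ => P x) (fun _ => P y)

private lemma sum_one_coord' (P : A → ℝ) (hP : ∑ a, P a = 1) (j : ι) (g : A → ℝ) :
    ∑ f : ι → A, (∏ i, P (f i)) * g (f j) = ∑ x, P x * g x := by
  have expand : ∀ f : ι → A, g (f j) = ∑ x, (if f j = x then (1:ℝ) else 0) * g x := by
    intro f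
    simp [ite_mul, Finset.sum_ite_eq]
  calc ∑ f : ι → A, (∏ i, P (f i)) * g (f j)
      = ∑ f : ι → A, ∑ x, ((∏ i, P (f i)) * (if f j = x then 1 else 0)) * g x := by
        refine Finset.sum_congr rfl fun f _ => ?_
        rw [expand f, Finset.mul_sum]
        exact Finset.sum_congr rfl fun x _ => by ring
    _ = ∑ x, ∑ f : ι → A, ((∏ i, P (f i)) * (if f j = x then 1 else 0)) * g x :=
        Finset.sum_comm
    _ = ∑ x, P x * g x := by
        refine Finset.sum_congr rfl fun x _ => ?_
        rw [← Finset.sum_mul, sum_coord_ind' P hP j x]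

private lemma sum_two_coords' (P : A → ℝ) (hP : ∑ a, P a = 1) {j k : ι} (hjk : j ≠ k)
    (g : A → A → ℝ) :
    ∑ f : ι → A, (∏ i, P (f i)) * g (f j) (f k) = ∑ x, ∑ y, (P x * P y) * g x y := by
  have expand : ∀ f : ι → A, g (f j) (f k)
      = ∑ x, ∑ y, ((if f j = x then (1:ℝ) else 0) * (if f k = y then 1 else 0)) * g x y := by
    intro f
    simp [ite_mul, Finset.sum_ite_eq]
  calc ∑ f : ι → A, (∏ i, P (f i)) * g (f j) (f k)
      = ∑ f : ι → A, ∑ x, ∑ y,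
          ((∏ i, P (f i)) * ((if f j = x then (1:ℝ) else 0) * (if f k = y then 1 else 0))) * g x y := by
        refine Finset.sum_congr rfl fun f _ => ?_
        rw [expand f, Finset.mul_sum]
        refine Finset.sum_congr rfl fun x _ => ?_
        rw [Finset.mul_sum]
        exact Finset.sum_congr rfl fun y _ => by ring
    _ = ∑ x, ∑ y, ∑ f : ι → A,
          ((∏ i, P (f i)) * ((if f j = x then (1:ℝ) else 0) * (if f k = y then 1 else 0))) * g x y := by
        rw [Finset.sum_comm]
        exact Finset.sum_congr rfl fun x _ => Finset.sum_comm
    _ = ∑ x, ∑ y, (P x * P y) * g x y := by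
        refine Finset.sum_congr rfl fun x _ => Finset.sum_congr rfl fun y _ => ?_
        rw [← Finset.sum_mul, sum_coord_ind'2 P hP hjk x y]

private lemma sum_rotate3' {B C D : Type*} [Fintype B] [Fintype C] [Fintype D]
    (f : B → C → D → ℝ) :
    ∑ b, ∑ c, ∑ e, f b c e = ∑ c, ∑ e, ∑ b, f b c e := by
  rw [Finset.sum_comm]
  exact Finset.sum_congr rfl fun c _ => Finset.sum_comm

private lemma sum_rotate4' {B C D E : Type*} [Fintype B] [Fintype C] [Fintype D] [Fintype E]
    (f : B → C → D → E → ℝ) :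
    ∑ b, ∑ c, ∑ e, ∑ t, f b c e t = ∑ c, ∑ e, ∑ t, ∑ b, f b c e t := by
  rw [sum_rotate3' (fun b c e => ∑ t, f b c e t)]
  exact Finset.sum_congr rfl fun c _ => Finset.sum_congr rfl fun e _ => Finset.sum_comm



private lemma sum_rotate5'
 {B C D E F : Type*}
    [Fintype B] [Fintype C] [Fintype D] [Fintype E] [Fintype F]
    (f : B → C → D → E → F → ℝ) :
    ∑ b, ∑ c, ∑ e, ∑ t, ∑ u, f b c e t u = ∑ c, ∑ e, ∑ t, ∑ u, ∑ b, f b c e t u := by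
  rw [sum_rotate4' (fun b c e t => ∑ u, f b c e t u)]
  exact Finset.sum_congr rfl fun _ _ => Finset.sum_congr rfl fun _ _ =>
    Finset.sum_congr rfl fun _ _ => Finset.sum_comm

private lemma sum_extract' {B C D E : Type*} [Fintype B] [Fintype C] [Fintype D]
    (s : Finset E) (f : B → C → D → E → ℝ) :
    ∑ b, ∑ c, ∑ e, ∑ t ∈ s, f b c e t = ∑ t ∈ s, ∑ b, ∑ c, ∑ e, f b c e t := by
  calc ∑ b, ∑ c, ∑ e, ∑ t ∈ s, f b c e t
      = ∑ b, ∑ c, ∑ t ∈ s, ∑ e, f b c e t :=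
        Finset.sum_congr rfl fun b _ => Finset.sum_congr rfl fun c _ => Finset.sum_comm
    _ = ∑ b, ∑ t ∈ s, ∑ c, ∑ e, f b c e t :=
        Finset.sum_congr rfl fun b _ => Finset.sum_comm
    _ = ∑ t ∈ s, ∑ b, ∑ c, ∑ e, f b c e t := Finset.sum_comm

end helpers

attribute [local instance] Classical.propDecidable

private theorem T_bound1 {α β γ ι₁ ι₂ : Type*}
    [Fintype α] [Fintype β] [Fintype γ] [Fintype ι₁] [Fintype ι₂]
    [DecidableEq α] [DecidableEq β] [DecidableEq γ] [DecidableEq ι₁] [DecidableEq ι₂]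
    (PX : α → ℝ) (hPX : IsPMF PX) (PY : β → ℝ) (hPY : IsPMF PY)
    (W : α → β → γ → ℝ) (hW : ∀ x y, IsPMF (W x y))
    (𝒜 : Finset (α × β × γ)) (a₁ b₁ d : ℝ)
    (hA1 : ∀ p ∈ 𝒜, PX p.1 ≤ (2 : ℝ) ^ (-a₁))
    (hB1 : ∀ p ∈ 𝒜, (∑ x, PX x * PY p.2.1 * W x p.2.1 p.2.2) ≤ (2 : ℝ) ^ (-b₁))
    (hcard : (𝒜.card : ℝ) ≤ (2 : ℝ) ^ d)
    {m₁ n₁ : ι₁} (hne : n₁ ≠ m₁) (m₂ : ι₂) :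
    (∑ cb1 : ι₁ → α, ∑ cb2 : ι₂ → β, ∑ z : γ,
      (∏ i, PX (cb1 i)) * (∏ j, PY (cb2 j)) * W (cb1 m₁) (cb2 m₂) z *
      (if (cb1 n₁, cb2 m₂, z) ∈ 𝒜 then 1 else 0))
    ≤ (2 : ℝ) ^ (-(a₁ + b₁ - d)) := by
  set g : α → α → ℝ := fun x x' => ∑ cb2 : ι₂ → β, (∏ j, PY (cb2 j)) *
      (∑ z, W x (cb2 m₂) z * (if (x', cb2 m₂, z) ∈ 𝒜 then 1 else 0)) with hg
  have step1 : (∑ cb1 : ι₁ → α, ∑ cb2 : ι₂ → β, ∑ z : γ,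
      (∏ i, PX (cb1 i)) * (∏ j, PY (cb2 j)) * W (cb1 m₁) (cb2 m₂) z *
      (if (cb1 n₁, cb2 m₂, z) ∈ 𝒜 then 1 else 0))
      = ∑ cb1 : ι₁ → α, (∏ i, PX (cb1 i)) * g (cb1 m₁) (cb1 n₁) := by
    refine Finset.sum_congr rfl fun cb1 _ => ?_
    rw [hg, Finset.mul_sum]
    refine Finset.sum_congr rfl fun cb2 _ => ?_
    rw [Finset.mul_sum, Finset.mul_sum]
    exact Finset.sum_congr rfl fun z _ => by ring
  have step2 : ∀ x x', g x x' = ∑ y, PY y *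
      (∑ z, W x y z * (if (x', y, z) ∈ 𝒜 then 1 else 0)) := by
    intro x x'
    rw [hg]
    exact sum_one_coord' PY hPY.2 m₂ (fun y => ∑ z, W x y z * (if (x', y, z) ∈ 𝒜 then 1 else 0))
  rw [step1, sum_two_coords' PX hPX.2 (Ne.symm hne) g]
  have step3 : (∑ x, ∑ x', (PX x * PX x') * g x x')
      = ∑ x, ∑ x', ∑ y, ∑ z, (PX x * PX x') *
          (PY y * (W x y z * (if (x', y, z) ∈ 𝒜 then 1 else 0))) := by
    refine Finset.sum_congr rfl fun x _ => Finset.sum_congr rfl fun x' _ => ?_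
    rw [step2]
    simp only [Finset.mul_sum]
  rw [step3, sum_rotate4' (fun x x' y z => (PX x * PX x') *
      (PY y * (W x y z * (if (x', y, z) ∈ 𝒜 then 1 else 0))))]
  have step4 : (∑ x', ∑ y, ∑ z, ∑ x, (PX x * PX x') *
      (PY y * (W x y z * (if (x', y, z) ∈ 𝒜 then 1 else 0))))
      ≤ ∑ x', ∑ y, ∑ z : γ, (if (x', y, z) ∈ 𝒜 then (2:ℝ)^(-a₁) * (2:ℝ)^(-b₁) else 0) := by
    refine Finset.sum_le_sum fun x' _ => Finset.sum_le_sum fun y _ =>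
      Finset.sum_le_sum fun z _ => ?_
    by_cases hmem : (x', y, z) ∈ 𝒜
    · have heq : (∑ x, (PX x * PX x') * (PY y * (W x y z *
          (if (x', y, z) ∈ 𝒜 then (1:ℝ) else 0))))
          = PX x' * ∑ x, PX x * PY y * W x y z := by
        rw [if_pos hmem, Finset.mul_sum]
        exact Finset.sum_congr rfl fun x _ => by ring
      rw [heq, if_pos hmem]
      have h1 := hA1 (x', y, z) hmem
      have h2 := hB1 (x', y, z) hmem
      exact mul_le_mul h1 h2
        (Finset.sum_nonneg fun x _ => mul_nonneg (mul_nonneg (hPX.1 x) (hPY.1 y)) ((hW x y).1 z))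
        (Real.rpow_nonneg (by norm_num) _)
    · simp [hmem]
  refine le_trans step4 ?_
  have flat : (∑ x', ∑ y, ∑ z : γ, (if (x', y, z) ∈ 𝒜 then (2:ℝ)^(-a₁) * (2:ℝ)^(-b₁) else 0))
      = ∑ p : α × β × γ, (if p ∈ 𝒜 then (2:ℝ)^(-a₁) * (2:ℝ)^(-b₁) else 0) := by
    rw [Fintype.sum_prod_type]
    exact Finset.sum_congr rfl fun x' _ =>
      (Fintype.sum_prod_type (fun q : β × γ =>
        if (x', q) ∈ 𝒜 then (2:ℝ)^(-a₁) * (2:ℝ)^(-b₁) else 0)).symm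
  rw [flat, Finset.sum_ite_mem, Finset.univ_inter, Finset.sum_const, nsmul_eq_mul]
  have hrw : (2 : ℝ) ^ (-(a₁ + b₁ - d)) = (2:ℝ)^d * ((2:ℝ)^(-a₁) * (2:ℝ)^(-b₁)) := by
    rw [show -(a₁ + b₁ - d) = d + (-a₁ + -b₁) by ring, Real.rpow_add two_pos,
      Real.rpow_add two_pos]
  rw [hrw]
  exact mul_le_mul_of_nonneg_right hcard
    (mul_nonneg (Real.rpow_nonneg (by norm_num) _) (Real.rpow_nonneg (by norm_num) _))

private theorem T_bound2 {α β γ ι₁ ι₂ : Type*}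
    [Fintype α] [Fintype β] [Fintype γ] [Fintype ι₁] [Fintype ι₂]
    [DecidableEq α] [DecidableEq β] [DecidableEq γ] [DecidableEq ι₁] [DecidableEq ι₂]
    (PX : α → ℝ) (hPX : IsPMF PX) (PY : β → ℝ) (hPY : IsPMF PY)
    (W : α → β → γ → ℝ) (hW : ∀ x y, IsPMF (W x y))
    (𝒜 : Finset (α × β × γ)) (a₂ b₂ d : ℝ)
    (hA2 : ∀ p ∈ 𝒜, PY p.2.1 ≤ (2 : ℝ) ^ (-a₂))
    (hB2 : ∀ p ∈ 𝒜, (∑ y, PX p.1 * PY y * W p.1 y p.2.2) ≤ (2 : ℝ) ^ (-b₂))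
    (hcard : (𝒜.card : ℝ) ≤ (2 : ℝ) ^ d)
    (m₁ : ι₁) {m₂ n₂ : ι₂} (hne : n₂ ≠ m₂) :
    (∑ cb1 : ι₁ → α, ∑ cb2 : ι₂ → β, ∑ z : γ,
      (∏ i, PX (cb1 i)) * (∏ j, PY (cb2 j)) * W (cb1 m₁) (cb2 m₂) z *
      (if (cb1 m₁, cb2 n₂, z) ∈ 𝒜 then 1 else 0))
    ≤ (2 : ℝ) ^ (-(a₂ + b₂ - d)) := by
  set g : α → ℝ := fun x => ∑ cb2 : ι₂ → β, (∏ j, PY (cb2 j)) *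
      (∑ z, W x (cb2 m₂) z * (if (x, cb2 n₂, z) ∈ 𝒜 then 1 else 0)) with hg
  have step1 : (∑ cb1 : ι₁ → α, ∑ cb2 : ι₂ → β, ∑ z : γ,
      (∏ i, PX (cb1 i)) * (∏ j, PY (cb2 j)) * W (cb1 m₁) (cb2 m₂) z *
      (if (cb1 m₁, cb2 n₂, z) ∈ 𝒜 then 1 else 0))
      = ∑ cb1 : ι₁ → α, (∏ i, PX (cb1 i)) * g (cb1 m₁) := by
    refine Finset.sum_congr rfl fun cb1 _ => ?_
    rw [hg]
    simp only [Finset.mul_sum]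
    exact Finset.sum_congr rfl fun cb2 _ => Finset.sum_congr rfl fun z _ => by ring
  have step2 : ∀ x, g x = ∑ y, ∑ y', (PY y * PY y') *
      (∑ z, W x y z * (if (x, y', z) ∈ 𝒜 then 1 else 0)) := by
    intro x
    rw [hg]
    exact sum_two_coords' PY hPY.2 (Ne.symm hne)
      (fun y y' => ∑ z, W x y z * (if (x, y', z) ∈ 𝒜 then 1 else 0))
  rw [step1, sum_one_coord' PX hPX.2 m₁ g]
  have step3 : (∑ x, PX x * g x)
      = ∑ x, ∑ y, ∑ y', ∑ z, PX x * ((PY y * PY y') *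
          (W x y z * (if (x, y', z) ∈ 𝒜 then 1 else 0))) := by
    refine Finset.sum_congr rfl fun x _ => ?_
    rw [step2]
    simp only [Finset.mul_sum]
  rw [step3]
  have rot : (∑ x, ∑ y, ∑ y', ∑ z, PX x * ((PY y * PY y') *
          (W x y z * (if (x, y', z) ∈ 𝒜 then 1 else 0))))
      = ∑ x, ∑ y', ∑ z, ∑ y, PX x * ((PY y * PY y') *
          (W x y z * (if (x, y', z) ∈ 𝒜 then 1 else 0))) := by
    refine Finset.sum_congr rfl fun x _ => ?_
    exact sum_rotate3' (fun y y' z => PX x * ((PY y * PY y') *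
          (W x y z * (if (x, y', z) ∈ 𝒜 then 1 else 0))))
  rw [rot]
  have step4 : (∑ x, ∑ y', ∑ z, ∑ y, PX x * ((PY y * PY y') *
          (W x y z * (if (x, y', z) ∈ 𝒜 then 1 else 0))))
      ≤ ∑ x, ∑ y', ∑ z : γ, (if (x, y', z) ∈ 𝒜 then (2:ℝ)^(-a₂) * (2:ℝ)^(-b₂) else 0) := by
    refine Finset.sum_le_sum fun x _ => Finset.sum_le_sum fun y' _ =>
      Finset.sum_le_sum fun z _ => ?_
    by_cases hmem : (x, y', z) ∈ 𝒜
    · have heq : (∑ y, PX x * ((PY y * PY y') *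
          (W x y z * (if (x, y', z) ∈ 𝒜 then (1:ℝ) else 0))))
          = PY y' * ∑ y, PX x * PY y * W x y z := by
        rw [if_pos hmem, Finset.mul_sum]
        exact Finset.sum_congr rfl fun y _ => by ring
      rw [heq, if_pos hmem]
      exact mul_le_mul (hA2 (x, y', z) hmem) (hB2 (x, y', z) hmem)
        (Finset.sum_nonneg fun y _ => mul_nonneg (mul_nonneg (hPX.1 x) (hPY.1 y)) ((hW x y).1 z))
        (Real.rpow_nonneg (by norm_num) _)
    · simp [hmem]
  refine le_trans step4 ?_
  have flat : (∑ x, ∑ y', ∑ z : γ, (if (x, y', z) ∈ 𝒜 then (2:ℝ)^(-a₂) * (2:ℝ)^(-b₂) else 0))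
      = ∑ p : α × β × γ, (if p ∈ 𝒜 then (2:ℝ)^(-a₂) * (2:ℝ)^(-b₂) else 0) := by
    rw [Fintype.sum_prod_type]
    exact Finset.sum_congr rfl fun x _ =>
      (Fintype.sum_prod_type (fun q : β × γ =>
        if (x, q) ∈ 𝒜 then (2:ℝ)^(-a₂) * (2:ℝ)^(-b₂) else 0)).symm
  rw [flat, Finset.sum_ite_mem, Finset.univ_inter, Finset.sum_const, nsmul_eq_mul]
  have hrw : (2 : ℝ) ^ (-(a₂ + b₂ - d)) = (2:ℝ)^d * ((2:ℝ)^(-a₂) * (2:ℝ)^(-b₂)) := by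
    rw [show -(a₂ + b₂ - d) = d + (-a₂ + -b₂) by ring, Real.rpow_add two_pos,
      Real.rpow_add two_pos]
  rw [hrw]
  exact mul_le_mul_of_nonneg_right hcard
    (mul_nonneg (Real.rpow_nonneg (by norm_num) _) (Real.rpow_nonneg (by norm_num) _))

private theorem T_bound3 {α β γ ι₁ ι₂ : Type*}
    [Fintype α] [Fintype β] [Fintype γ] [Fintype ι₁] [Fintype ι₂]
    [DecidableEq α] [DecidableEq β] [DecidableEq γ] [DecidableEq ι₁] [DecidableEq ι₂]
    (PX : α → ℝ) (hPX : IsPMF PX) (PY : β → ℝ) (hPY : IsPMF PY)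
    (W : α → β → γ → ℝ) (hW : ∀ x y, IsPMF (W x y))
    (𝒜 : Finset (α × β × γ)) (a₁ a₂ c d : ℝ)
    (hA1 : ∀ p ∈ 𝒜, PX p.1 ≤ (2 : ℝ) ^ (-a₁))
    (hA2 : ∀ p ∈ 𝒜, PY p.2.1 ≤ (2 : ℝ) ^ (-a₂))
    (hC : ∀ p ∈ 𝒜, (∑ x, ∑ y, PX x * PY y * W x y p.2.2) ≤ (2 : ℝ) ^ (-c))
    (hcard : (𝒜.card : ℝ) ≤ (2 : ℝ) ^ d)
    {m₁ n₁ : ι₁} (hne1 : n₁ ≠ m₁) {m₂ n₂ : ι₂} (hne2 : n₂ ≠ m₂) :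
    (∑ cb1 : ι₁ → α, ∑ cb2 : ι₂ → β, ∑ z : γ,
      (∏ i, PX (cb1 i)) * (∏ j, PY (cb2 j)) * W (cb1 m₁) (cb2 m₂) z *
      (if (cb1 n₁, cb2 n₂, z) ∈ 𝒜 then 1 else 0))
    ≤ (2 : ℝ) ^ (-(a₁ + a₂ + c - d)) := by
  set g : α → α → ℝ := fun x x' => ∑ cb2 : ι₂ → β, (∏ j, PY (cb2 j)) *
      (∑ z, W x (cb2 m₂) z * (if (x', cb2 n₂, z) ∈ 𝒜 then 1 else 0)) with hg
  have step1 : (∑ cb1 : ι₁ → α, ∑ cb2 : ι₂ → β, ∑ z : γ,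
      (∏ i, PX (cb1 i)) * (∏ j, PY (cb2 j)) * W (cb1 m₁) (cb2 m₂) z *
      (if (cb1 n₁, cb2 n₂, z) ∈ 𝒜 then 1 else 0))
      = ∑ cb1 : ι₁ → α, (∏ i, PX (cb1 i)) * g (cb1 m₁) (cb1 n₁) := by
    refine Finset.sum_congr rfl fun cb1 _ => ?_
    rw [hg]
    simp only [Finset.mul_sum]
    exact Finset.sum_congr rfl fun cb2 _ => Finset.sum_congr rfl fun z _ => by ring
  have step2 : ∀ x x', g x x' = ∑ y, ∑ y', (PY y * PY y') *
      (∑ z, W x y z * (if (x', y', z) ∈ 𝒜 then 1 else 0)) := by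
    intro x x'
    rw [hg]
    exact sum_two_coords' PY hPY.2 (Ne.symm hne2)
      (fun y y' => ∑ z, W x y z * (if (x', y', z) ∈ 𝒜 then 1 else 0))
  rw [step1, sum_two_coords' PX hPX.2 (Ne.symm hne1) g]
  have step3 : (∑ x, ∑ x', (PX x * PX x') * g x x')
      = ∑ x, ∑ x', ∑ y, ∑ y', ∑ z, (PX x * PX x') * ((PY y * PY y') *
          (W x y z * (if (x', y', z) ∈ 𝒜 then 1 else 0))) := by
    refine Finset.sum_congr rfl fun x _ => Finset.sum_congr rfl fun x' _ => ?_
    rw [step2]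
    simp only [Finset.mul_sum]
  rw [step3, sum_rotate5' (fun x x' y y' z => (PX x * PX x') * ((PY y * PY y') *
          (W x y z * (if (x', y', z) ∈ 𝒜 then 1 else 0))))]
  have rot : (∑ x', ∑ y, ∑ y', ∑ z, ∑ x, (PX x * PX x') * ((PY y * PY y') *
          (W x y z * (if (x', y', z) ∈ 𝒜 then 1 else 0))))
      = ∑ x', ∑ y', ∑ z, ∑ x, ∑ y, (PX x * PX x') * ((PY y * PY y') *
          (W x y z * (if (x', y', z) ∈ 𝒜 then 1 else 0))) := by
    refine Finset.sum_congr rfl fun x' _ => ?_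
    exact sum_rotate4' (fun y y' z x => (PX x * PX x') * ((PY y * PY y') *
          (W x y z * (if (x', y', z) ∈ 𝒜 then 1 else 0))))
  rw [rot]
  have step4 : (∑ x', ∑ y', ∑ z, ∑ x, ∑ y, (PX x * PX x') * ((PY y * PY y') *
          (W x y z * (if (x', y', z) ∈ 𝒜 then 1 else 0))))
      ≤ ∑ x', ∑ y', ∑ z : γ,
          (if (x', y', z) ∈ 𝒜 then ((2:ℝ)^(-a₁) * (2:ℝ)^(-a₂)) * (2:ℝ)^(-c) else 0) := by
    refine Finset.sum_le_sum fun x' _ => Finset.sum_le_sum fun y' _ =>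
      Finset.sum_le_sum fun z _ => ?_
    by_cases hmem : (x', y', z) ∈ 𝒜
    · have heq : (∑ x, ∑ y, (PX x * PX x') * ((PY y * PY y') *
          (W x y z * (if (x', y', z) ∈ 𝒜 then (1:ℝ) else 0))))
          = (PX x' * PY y') * ∑ x, ∑ y, PX x * PY y * W x y z := by
        rw [if_pos hmem]
        simp only [Finset.mul_sum]
        exact Finset.sum_congr rfl fun x _ => Finset.sum_congr rfl fun y _ => by ring
      rw [heq, if_pos hmem]
      refine mul_le_mul
        (mul_le_mul (hA1 (x', y', z) hmem) (hA2 (x', y', z) hmem) (hPY.1 y')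
          (Real.rpow_nonneg (by norm_num) _))
        (hC (x', y', z) hmem)
        (Finset.sum_nonneg fun x _ => Finset.sum_nonneg fun y _ =>
          mul_nonneg (mul_nonneg (hPX.1 x) (hPY.1 y)) ((hW x y).1 z))
        (mul_nonneg (Real.rpow_nonneg (by norm_num) _) (Real.rpow_nonneg (by norm_num) _))
    · simp [hmem]
  refine le_trans step4 ?_
  have flat : (∑ x', ∑ y', ∑ z : γ,
      (if (x', y', z) ∈ 𝒜 then ((2:ℝ)^(-a₁) * (2:ℝ)^(-a₂)) * (2:ℝ)^(-c) else 0))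
      = ∑ p : α × β × γ, (if p ∈ 𝒜 then ((2:ℝ)^(-a₁) * (2:ℝ)^(-a₂)) * (2:ℝ)^(-c) else 0) := by
    rw [Fintype.sum_prod_type]
    exact Finset.sum_congr rfl fun x' _ =>
      (Fintype.sum_prod_type (fun q : β × γ =>
        if (x', q) ∈ 𝒜 then ((2:ℝ)^(-a₁) * (2:ℝ)^(-a₂)) * (2:ℝ)^(-c) else 0)).symm
  rw [flat, Finset.sum_ite_mem, Finset.univ_inter, Finset.sum_const, nsmul_eq_mul]
  have hrw : (2 : ℝ) ^ (-(a₁ + a₂ + c - d))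
      = (2:ℝ)^d * (((2:ℝ)^(-a₁) * (2:ℝ)^(-a₂)) * (2:ℝ)^(-c)) := by
    rw [show -(a₁ + a₂ + c - d) = d + (-a₁ + -a₂ + -c) by ring, Real.rpow_add two_pos,
      show -a₁ + -a₂ + -c = (-a₁ + -a₂) + -c by ring, Real.rpow_add two_pos,
      Real.rpow_add two_pos]
  rw [hrw]
  exact mul_le_mul_of_nonneg_right hcard
    (mul_nonneg (mul_nonneg (Real.rpow_nonneg (by norm_num) _) (Real.rpow_nonneg (by norm_num) _))
      (Real.rpow_nonneg (by norm_num) _))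


/-- Random-coding MAC achievability. Codebooks: `2^C₁` codewords `X(m₁)` i.i.d. `~ P_X`
and `2^C₂` codewords `Y(m₂)` i.i.d. `~ P_Y`; the channel output `Z ~ P_{Z|XY}(·|X(m₁),Y(m₂))`
when the (fixed, by symmetry) message pair `(m₁,m₂)` is sent; the decoder looks for a
unique pair `(m₁',m₂')` with `(X(m₁'),Y(m₂'),z) ∈ 𝒜`, so an error occurs iff the true
triple is outside `𝒜` or some wrong pair's triple lies in `𝒜`. If every `(x,y,z) ∈ 𝒜`
satisfies `P_X(x) ≤ 2^{-a₁}`, `P_Y(y) ≤ 2^{-a₂}`, `P_Z(z) ≤ 2^{-c}`,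
`P_{YZ}(y,z) ≤ 2^{-b₁}`, `P_{XZ}(x,z) ≤ 2^{-b₂}` and `|𝒜| ≤ 2^d`, then the average
probability of error is at most
`Pr[(X(m₁),Y(m₂),Z) ∉ 𝒜] + 2^C₁ 2^{-(a₁+b₁-d)} + 2^C₂ 2^{-(a₂+b₂-d)} + 2^{C₁+C₂} 2^{-(a₁+a₂+c-d)}`. -/
theorem mac_random_coding_achievability {α β γ : Type*}
    [Fintype α] [Fintype β] [Fintype γ]
    [DecidableEq α] [DecidableEq β] [DecidableEq γ]
    (PX : α → ℝ) (hPX : IsPMF PX) (PY : β → ℝ) (hPY : IsPMF PY)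
    (W : α → β → γ → ℝ) (hW : ∀ x y, IsPMF (W x y))
    (C₁ C₂ : ℕ) (m₁ : Fin (2 ^ C₁)) (m₂ : Fin (2 ^ C₂))
    (𝒜 : Finset (α × β × γ)) (a₁ a₂ b₁ b₂ c d : ℝ)
    (h𝒜 : ∀ p ∈ 𝒜,
      PX p.1 ≤ (2 : ℝ) ^ (-a₁) ∧
      PY p.2.1 ≤ (2 : ℝ) ^ (-a₂) ∧
      (∑ x, ∑ y, PX x * PY y * W x y p.2.2) ≤ (2 : ℝ) ^ (-c) ∧
      (∑ x, PX x * PY p.2.1 * W x p.2.1 p.2.2) ≤ (2 : ℝ) ^ (-b₁) ∧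
      (∑ y, PX p.1 * PY y * W p.1 y p.2.2) ≤ (2 : ℝ) ^ (-b₂))
    (hcard : (𝒜.card : ℝ) ≤ (2 : ℝ) ^ d) :
    (∑ cb1 : Fin (2 ^ C₁) → α, ∑ cb2 : Fin (2 ^ C₂) → β, ∑ z : γ,
      (∏ i, PX (cb1 i)) * (∏ j, PY (cb2 j)) * W (cb1 m₁) (cb2 m₂) z *
      (if (cb1 m₁, cb2 m₂, z) ∉ 𝒜 ∨
          ∃ m₁' m₂', (m₁', m₂') ≠ (m₁, m₂) ∧ (cb1 m₁', cb2 m₂', z) ∈ 𝒜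
       then 1 else 0))
    ≤ (∑ cb1 : Fin (2 ^ C₁) → α, ∑ cb2 : Fin (2 ^ C₂) → β, ∑ z : γ,
        (∏ i, PX (cb1 i)) * (∏ j, PY (cb2 j)) * W (cb1 m₁) (cb2 m₂) z *
        (if (cb1 m₁, cb2 m₂, z) ∉ 𝒜 then 1 else 0))
      + (2 : ℝ) ^ C₁ * (2 : ℝ) ^ (-(a₁ + b₁ - d))
      + (2 : ℝ) ^ C₂ * (2 : ℝ) ^ (-(a₂ + b₂ - d))
      + (2 : ℝ) ^ (C₁ + C₂) * (2 : ℝ) ^ (-(a₁ + a₂ + c - d)) := by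
  
  set S : Finset (Fin (2 ^ C₁) × Fin (2 ^ C₂)) :=
    Finset.univ.filter (fun p => p ≠ (m₁, m₂)) with hS
  set T : Fin (2 ^ C₁) × Fin (2 ^ C₂) → ℝ := fun p =>
    ∑ cb1 : Fin (2 ^ C₁) → α, ∑ cb2 : Fin (2 ^ C₂) → β, ∑ z : γ,
      (∏ i, PX (cb1 i)) * (∏ j, PY (cb2 j)) * W (cb1 m₁) (cb2 m₂) z *
      (if (cb1 p.1, cb2 p.2, z) ∈ 𝒜 then 1 else 0) with hT
  have hind : ∀ (P : Prop) [Decidable P], (0:ℝ) ≤ if P then 1 else 0 := fun P _ => by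
    split_ifs <;> norm_num
  have hμ : ∀ (cb1 : Fin (2 ^ C₁) → α) (cb2 : Fin (2 ^ C₂) → β) (z : γ),
      0 ≤ (∏ i, PX (cb1 i)) * (∏ j, PY (cb2 j)) * W (cb1 m₁) (cb2 m₂) z := fun cb1 cb2 z =>
    mul_nonneg (mul_nonneg (Finset.prod_nonneg fun i _ => hPX.1 _)
      (Finset.prod_nonneg fun j _ => hPY.1 _)) ((hW _ _).1 z)
  have ind_le : ∀ (cb1 : Fin (2 ^ C₁) → α) (cb2 : Fin (2 ^ C₂) → β) (z : γ),
      (if (cb1 m₁, cb2 m₂, z) ∉ 𝒜 ∨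
          ∃ m₁' m₂', (m₁', m₂') ≠ (m₁, m₂) ∧ (cb1 m₁', cb2 m₂', z) ∈ 𝒜 then (1:ℝ) else 0)
      ≤ (if (cb1 m₁, cb2 m₂, z) ∉ 𝒜 then 1 else 0)
        + ∑ p ∈ S, (if (cb1 p.1, cb2 p.2, z) ∈ 𝒜 then (1:ℝ) else 0) := by
    intro cb1 cb2 z
    have hsum0 : (0:ℝ) ≤ ∑ p ∈ S, (if (cb1 p.1, cb2 p.2, z) ∈ 𝒜 then (1:ℝ) else 0) :=
      Finset.sum_nonneg fun p _ => hind _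
    have hind0 := hind ((cb1 m₁, cb2 m₂, z) ∉ 𝒜)
    by_cases h : (cb1 m₁, cb2 m₂, z) ∉ 𝒜 ∨
        ∃ m₁' m₂', (m₁', m₂') ≠ (m₁, m₂) ∧ (cb1 m₁', cb2 m₂', z) ∈ 𝒜
    · rw [if_pos h]
      rcases h with h0 | ⟨n₁, n₂, hne, hmem⟩
      · rw [if_pos h0]; linarith
      · have hp : (n₁, n₂) ∈ S := by simp [hS, hne]
        have hone : (1:ℝ) ≤ ∑ p ∈ S, (if (cb1 p.1, cb2 p.2, z) ∈ 𝒜 then (1:ℝ) else 0) := by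
          have := Finset.single_le_sum (f := fun p : Fin (2 ^ C₁) × Fin (2 ^ C₂) =>
            (if (cb1 p.1, cb2 p.2, z) ∈ 𝒜 then (1:ℝ) else 0)) (fun p _ => hind _) hp
          simpa [hmem] using this
        linarith
    · rw [if_neg h]; linarith
  have union : (∑ cb1 : Fin (2 ^ C₁) → α, ∑ cb2 : Fin (2 ^ C₂) → β, ∑ z : γ,
      (∏ i, PX (cb1 i)) * (∏ j, PY (cb2 j)) * W (cb1 m₁) (cb2 m₂) z *
      (if (cb1 m₁, cb2 m₂, z) ∉ 𝒜 ∨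
          ∃ m₁' m₂', (m₁', m₂') ≠ (m₁, m₂) ∧ (cb1 m₁', cb2 m₂', z) ∈ 𝒜
       then 1 else 0))
      ≤ (∑ cb1 : Fin (2 ^ C₁) → α, ∑ cb2 : Fin (2 ^ C₂) → β, ∑ z : γ,
          (∏ i, PX (cb1 i)) * (∏ j, PY (cb2 j)) * W (cb1 m₁) (cb2 m₂) z *
          (if (cb1 m₁, cb2 m₂, z) ∉ 𝒜 then 1 else 0))
        + ∑ p ∈ S, T p := by
    calc (∑ cb1 : Fin (2 ^ C₁) → α, ∑ cb2 : Fin (2 ^ C₂) → β, ∑ z : γ,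
        (∏ i, PX (cb1 i)) * (∏ j, PY (cb2 j)) * W (cb1 m₁) (cb2 m₂) z *
        (if (cb1 m₁, cb2 m₂, z) ∉ 𝒜 ∨
            ∃ m₁' m₂', (m₁', m₂') ≠ (m₁, m₂) ∧ (cb1 m₁', cb2 m₂', z) ∈ 𝒜
         then 1 else 0))
        ≤ ∑ cb1 : Fin (2 ^ C₁) → α, ∑ cb2 : Fin (2 ^ C₂) → β, ∑ z : γ,
          ((∏ i, PX (cb1 i)) * (∏ j, PY (cb2 j)) * W (cb1 m₁) (cb2 m₂) z *
            (if (cb1 m₁, cb2 m₂, z) ∉ 𝒜 then 1 else 0)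
          + ∑ p ∈ S, (∏ i, PX (cb1 i)) * (∏ j, PY (cb2 j)) * W (cb1 m₁) (cb2 m₂) z *
              (if (cb1 p.1, cb2 p.2, z) ∈ 𝒜 then 1 else 0)) := by
          refine Finset.sum_le_sum fun cb1 _ => Finset.sum_le_sum fun cb2 _ =>
            Finset.sum_le_sum fun z _ => ?_
          rw [← Finset.mul_sum, ← mul_add]
          exact mul_le_mul_of_nonneg_left (ind_le cb1 cb2 z) (hμ cb1 cb2 z)
      _ = (∑ cb1 : Fin (2 ^ C₁) → α, ∑ cb2 : Fin (2 ^ C₂) → β, ∑ z : γ,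
            (∏ i, PX (cb1 i)) * (∏ j, PY (cb2 j)) * W (cb1 m₁) (cb2 m₂) z *
            (if (cb1 m₁, cb2 m₂, z) ∉ 𝒜 then 1 else 0))
          + ∑ cb1 : Fin (2 ^ C₁) → α, ∑ cb2 : Fin (2 ^ C₂) → β, ∑ z : γ, ∑ p ∈ S,
              (∏ i, PX (cb1 i)) * (∏ j, PY (cb2 j)) * W (cb1 m₁) (cb2 m₂) z *
              (if (cb1 p.1, cb2 p.2, z) ∈ 𝒜 then 1 else 0) := by
          simp only [Finset.sum_add_distrib]
      _ = (∑ cb1 : Fin (2 ^ C₁) → α, ∑ cb2 : Fin (2 ^ C₂) → β, ∑ z : γ,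
            (∏ i, PX (cb1 i)) * (∏ j, PY (cb2 j)) * W (cb1 m₁) (cb2 m₂) z *
            (if (cb1 m₁, cb2 m₂, z) ∉ 𝒜 then 1 else 0))
          + ∑ p ∈ S, T p := by
          rw [sum_extract' S (fun (cb1 : Fin (2 ^ C₁) → α) (cb2 : Fin (2 ^ C₂) → β) (z : γ)
              (p : Fin (2 ^ C₁) × Fin (2 ^ C₂)) =>
            (∏ i, PX (cb1 i)) * (∏ j, PY (cb2 j)) * W (cb1 m₁) (cb2 m₂) z *
            (if (cb1 p.1, cb2 p.2, z) ∈ 𝒜 then 1 else 0))]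
  have hB1 : (0:ℝ) ≤ (2:ℝ) ^ (-(a₁ + b₁ - d)) := Real.rpow_nonneg (by norm_num) _
  have hB2 : (0:ℝ) ≤ (2:ℝ) ^ (-(a₂ + b₂ - d)) := Real.rpow_nonneg (by norm_num) _
  have hB3 : (0:ℝ) ≤ (2:ℝ) ^ (-(a₁ + a₂ + c - d)) := Real.rpow_nonneg (by norm_num) _
  have sum1 : ∑ p ∈ S.filter (fun p => p.2 = m₂), T p
      ≤ (2:ℝ) ^ C₁ * (2:ℝ) ^ (-(a₁ + b₁ - d)) := by
    have hb : ∀ p ∈ S.filter (fun p => p.2 = m₂), T p ≤ (2:ℝ) ^ (-(a₁ + b₁ - d)) := by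
      intro p hp
      simp only [hS, Finset.mem_filter, Finset.mem_univ, true_and] at hp
      obtain ⟨hne, h2⟩ := hp
      have h1 : p.1 ≠ m₁ := fun h => hne (Prod.ext h h2)
      simp only [hT]
      rw [h2]
      exact T_bound1 PX hPX PY hPY W hW 𝒜 a₁ b₁ d
        (fun q hq => (h𝒜 q hq).1) (fun q hq => (h𝒜 q hq).2.2.2.1) hcard h1 m₂
    have hcnt : ((S.filter (fun p => p.2 = m₂)).card : ℝ) ≤ (2:ℝ) ^ C₁ := by
      have hn : (S.filter (fun p => p.2 = m₂)).card ≤ 2 ^ C₁ := by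
        have := Finset.card_le_card_of_injOn (s := S.filter (fun p => p.2 = m₂))
          (t := (Finset.univ : Finset (Fin (2 ^ C₁)))) Prod.fst
          (fun p _ => Finset.mem_univ _) ?_
        · simpa using this
        · intro p hp q hq hpq
          have hp' := Finset.mem_filter.mp (Finset.mem_coe.mp hp)
          have hq' := Finset.mem_filter.mp (Finset.mem_coe.mp hq)
          exact Prod.ext hpq (hp'.2.trans hq'.2.symm)
      exact_mod_cast hn
    calc ∑ p ∈ S.filter (fun p => p.2 = m₂), T p
        ≤ (S.filter (fun p => p.2 = m₂)).card • (2:ℝ) ^ (-(a₁ + b₁ - d)) :=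
          Finset.sum_le_card_nsmul _ _ _ hb
      _ = ((S.filter (fun p => p.2 = m₂)).card : ℝ) * (2:ℝ) ^ (-(a₁ + b₁ - d)) :=
          nsmul_eq_mul _ _
      _ ≤ (2:ℝ) ^ C₁ * (2:ℝ) ^ (-(a₁ + b₁ - d)) := mul_le_mul_of_nonneg_right hcnt hB1
  have sum2 : ∑ p ∈ (S.filter (fun p => ¬ p.2 = m₂)).filter (fun p => p.1 = m₁), T p
      ≤ (2:ℝ) ^ C₂ * (2:ℝ) ^ (-(a₂ + b₂ - d)) := by
    have hb : ∀ p ∈ (S.filter (fun p => ¬ p.2 = m₂)).filter (fun p => p.1 = m₁),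
        T p ≤ (2:ℝ) ^ (-(a₂ + b₂ - d)) := by
      intro p hp
      simp only [hS, Finset.mem_filter, Finset.mem_univ, true_and] at hp
      obtain ⟨⟨hne, h2⟩, h1⟩ := hp
      simp only [hT]
      rw [h1]
      exact T_bound2 PX hPX PY hPY W hW 𝒜 a₂ b₂ d
        (fun q hq => (h𝒜 q hq).2.1) (fun q hq => (h𝒜 q hq).2.2.2.2) hcard m₁ h2
    have hcnt : (((S.filter (fun p => ¬ p.2 = m₂)).filter (fun p => p.1 = m₁)).card : ℝ)
        ≤ (2:ℝ) ^ C₂ := by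
      have hn : ((S.filter (fun p => ¬ p.2 = m₂)).filter (fun p => p.1 = m₁)).card
          ≤ 2 ^ C₂ := by
        have := Finset.card_le_card_of_injOn
          (s := (S.filter (fun p => ¬ p.2 = m₂)).filter (fun p => p.1 = m₁))
          (t := (Finset.univ : Finset (Fin (2 ^ C₂)))) Prod.snd
          (fun p _ => Finset.mem_univ _) ?_
        · simpa using this
        · intro p hp q hq hpq
          have hp' := Finset.mem_filter.mp (Finset.mem_coe.mp hp)
          have hq' := Finset.mem_filter.mp (Finset.mem_coe.mp hq)
          exact Prod.ext (hp'.2.trans hq'.2.symm) hpq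
      exact_mod_cast hn
    calc ∑ p ∈ (S.filter (fun p => ¬ p.2 = m₂)).filter (fun p => p.1 = m₁), T p
        ≤ ((S.filter (fun p => ¬ p.2 = m₂)).filter (fun p => p.1 = m₁)).card •
            (2:ℝ) ^ (-(a₂ + b₂ - d)) := Finset.sum_le_card_nsmul _ _ _ hb
      _ = (((S.filter (fun p => ¬ p.2 = m₂)).filter (fun p => p.1 = m₁)).card : ℝ) *
            (2:ℝ) ^ (-(a₂ + b₂ - d)) := nsmul_eq_mul _ _
      _ ≤ (2:ℝ) ^ C₂ * (2:ℝ) ^ (-(a₂ + b₂ - d)) := mul_le_mul_of_nonneg_right hcnt hB2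
  have sum3 : ∑ p ∈ (S.filter (fun p => ¬ p.2 = m₂)).filter (fun p => ¬ p.1 = m₁), T p
      ≤ (2:ℝ) ^ (C₁ + C₂) * (2:ℝ) ^ (-(a₁ + a₂ + c - d)) := by
    have hb : ∀ p ∈ (S.filter (fun p => ¬ p.2 = m₂)).filter (fun p => ¬ p.1 = m₁),
        T p ≤ (2:ℝ) ^ (-(a₁ + a₂ + c - d)) := by
      intro p hp
      simp only [hS, Finset.mem_filter, Finset.mem_univ, true_and] at hp
      obtain ⟨⟨hne, h2⟩, h1⟩ := hp
      simp only [hT]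
      exact T_bound3 PX hPX PY hPY W hW 𝒜 a₁ a₂ c d
        (fun q hq => (h𝒜 q hq).1) (fun q hq => (h𝒜 q hq).2.1)
        (fun q hq => (h𝒜 q hq).2.2.1) hcard h1 h2
    have hcnt : (((S.filter (fun p => ¬ p.2 = m₂)).filter (fun p => ¬ p.1 = m₁)).card : ℝ)
        ≤ (2:ℝ) ^ (C₁ + C₂) := by
      have hn : ((S.filter (fun p => ¬ p.2 = m₂)).filter (fun p => ¬ p.1 = m₁)).card
          ≤ 2 ^ C₁ * 2 ^ C₂ := by
        simpa [Fintype.card_prod] using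
          (Finset.card_le_univ ((S.filter (fun p => ¬ p.2 = m₂)).filter (fun p => ¬ p.1 = m₁)))
      rw [pow_add]
      exact_mod_cast hn
    calc ∑ p ∈ (S.filter (fun p => ¬ p.2 = m₂)).filter (fun p => ¬ p.1 = m₁), T p
        ≤ ((S.filter (fun p => ¬ p.2 = m₂)).filter (fun p => ¬ p.1 = m₁)).card •
            (2:ℝ) ^ (-(a₁ + a₂ + c - d)) := Finset.sum_le_card_nsmul _ _ _ hb
      _ = (((S.filter (fun p => ¬ p.2 = m₂)).filter (fun p => ¬ p.1 = m₁)).card : ℝ) *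
            (2:ℝ) ^ (-(a₁ + a₂ + c - d)) := nsmul_eq_mul _ _
      _ ≤ (2:ℝ) ^ (C₁ + C₂) * (2:ℝ) ^ (-(a₁ + a₂ + c - d)) :=
          mul_le_mul_of_nonneg_right hcnt hB3
  have hsplit : ∑ p ∈ S, T p
      = ∑ p ∈ S.filter (fun p => p.2 = m₂), T p
        + (∑ p ∈ (S.filter (fun p => ¬ p.2 = m₂)).filter (fun p => p.1 = m₁), T p
          + ∑ p ∈ (S.filter (fun p => ¬ p.2 = m₂)).filter (fun p => ¬ p.1 = m₁), T p) := by
    rw [Finset.sum_filter_add_sum_filter_not (S.filter (fun p => ¬ p.2 = m₂))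
        (fun p => p.1 = m₁) T,
      Finset.sum_filter_add_sum_filter_not S (fun p => p.2 = m₂) T]
  have final : ∑ p ∈ S, T p
      ≤ (2:ℝ) ^ C₁ * (2:ℝ) ^ (-(a₁ + b₁ - d))
        + ((2:ℝ) ^ C₂ * (2:ℝ) ^ (-(a₂ + b₂ - d))
          + (2:ℝ) ^ (C₁ + C₂) * (2:ℝ) ^ (-(a₁ + a₂ + c - d))) := by
    rw [hsplit]
    exact add_le_add sum1 (add_le_add sum2 sum3)
  have := le_trans union (add_le_add (le_refl _) final)
  linarith
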